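/- Let p ∈ (0,1), q₁, q₂ ≥ 0 and q = q₁ + q₂. Then E[X₁^{q₁} X₂^{q₂}] where the joint Mellin transform is given by (1-p) Γ(q₂+1) ∑_{k=2}^∞ (k-1) p^{k-2} Γ(q₁+k-1)/Γ(pq+k) satisfies: as p → 1 (equivalently t = -ln p → 0+), (1/(1-p)) · (1-p) Γ(q₂+1) ∑_{k=2}^∞ (k-1) p^{k-2} Γ(q₁+k-1)/Γ(pq+k) converges, provided q₂ > 1, to ∫_0^1 (1-x)^{q₁} x^{q₂-2} dx. -/

import Mathlib

open Real Filter MeasureTheory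


/-- Interval integrability of `x^a (1-x)^b` on `[0,1]` for `a, b > -1`. -/
lemma intInt {a b : ℝ} (ha : -1 < a) (hb : -1 < b) :
    IntervalIntegrable (fun x : ℝ => x ^ a * (1 - x) ^ b) volume 0 1 := by
  have h1 : IntervalIntegrable (fun x : ℝ => x ^ a * (1 - x) ^ b) volume 0 (1/2) := by
    apply (intervalIntegral.intervalIntegrable_rpow' ha).mul_continuousOn
    apply ContinuousOn.rpow_const
    · exact (continuous_const.sub continuous_id).continuousOn
    · intro x hx
      rw [Set.uIcc_of_le (by norm_num)] at hx
      left
      have := hx.2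
      norm_num at this ⊢
      linarith
  have h2 : IntervalIntegrable (fun x : ℝ => x ^ a * (1 - x) ^ b) volume (1/2) 1 := by
    have h3 : IntervalIntegrable (fun x : ℝ => (1 - x) ^ b) volume (1/2) 1 := by
      have := (intervalIntegral.intervalIntegrable_rpow' hb (a := 0) (b := 1/2)).comp_sub_left 1
      norm_num at this
      exact this.symm
    have := h3.continuousOn_mul (g := fun x : ℝ => x ^ a) ?_
    · simpa [mul_comm] using this
    · apply ContinuousOn.rpow_const continuous_id.continuousOn
      intro x hx
      rw [Set.uIcc_of_le (by norm_num)] at hx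
      left
      have := hx.1
      norm_num at this ⊢
      linarith
  exact h1.trans h2

/-- Real Beta integral in terms of Gamma functions. -/
lemma betaReal {a b : ℝ} (ha : -1 < a) (hb : -1 < b) :
    ∫ x in (0:ℝ)..1, x ^ a * (1 - x) ^ b
      = Real.Gamma (a+1) * Real.Gamma (b+1) / Real.Gamma (a+b+2) := by
  have hu : (0:ℝ) < a + 1 := by linarith
  have hv : (0:ℝ) < b + 1 := by linarith
  have hc := Complex.Gamma_mul_Gamma_eq_betaIntegral
    (s := ((a+1 : ℝ) : ℂ)) (t := ((b+1 : ℝ) : ℂ)) (by simpa using hu) (by simpa using hv)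
  have hβ : Complex.betaIntegral ((a+1 : ℝ) : ℂ) ((b+1 : ℝ) : ℂ)
      = ((∫ x in (0:ℝ)..1, x ^ a * (1 - x) ^ b : ℝ) : ℂ) := by
    rw [Complex.betaIntegral, ← intervalIntegral.integral_ofReal]
    apply intervalIntegral.integral_congr
    intro x hx
    rw [Set.uIcc_of_le (by norm_num)] at hx
    have hx0 : (0:ℝ) ≤ x := hx.1
    have hx1 : (0:ℝ) ≤ 1 - x := by linarith [hx.2]
    have e1 : ((a+1:ℝ):ℂ) - 1 = (a:ℂ) := by push_cast; ring
    have e2 : ((b+1:ℝ):ℂ) - 1 = (b:ℂ) := by push_cast; ring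
    have e3 : ((1:ℂ) - (x:ℂ)) = ((1 - x : ℝ) : ℂ) := by push_cast; ring
    simp only [e1, e2, e3, Complex.ofReal_mul, ← Complex.ofReal_cpow hx0 a,
      ← Complex.ofReal_cpow hx1 b]
  rw [hβ] at hc
  have hne : Real.Gamma (a+b+2) ≠ 0 := (Real.Gamma_pos_of_pos (by linarith)).ne'
  have : ((a+1:ℝ):ℂ) + ((b+1:ℝ):ℂ) = ((a+b+2 : ℝ) : ℂ) := by push_cast; ring
  rw [this, Complex.Gamma_ofReal, Complex.Gamma_ofReal, Complex.Gamma_ofReal] at hc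
  have hc' : Real.Gamma (a+1) * Real.Gamma (b+1)
      = Real.Gamma (a+b+2) * ∫ x in (0:ℝ)..1, x ^ a * (1 - x) ^ b := by
    exact_mod_cast hc
  field_simp [hc']
  rw [hc']; ring

section
variable {q₁ s : ℝ}

lemma ptSum (h₁ : 0 ≤ q₁) {x : ℝ} (hx : x ∈ Set.Ioo (0:ℝ) 1) :
    HasSum (fun n : ℕ => ((n:ℝ)+1) * (x ^ (q₁+(n:ℝ)) * (1-x) ^ (s-1)))
      (x ^ q₁ * (1-x) ^ (s-3)) := by
  obtain ⟨hx0, hx1⟩ := hx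
  have h1x : (0:ℝ) < 1 - x := by linarith
  have hg : HasSum (fun n : ℕ => x ^ n) ((1-x)⁻¹) := hasSum_geometric_of_lt_one hx0.le hx1
  have hn : HasSum (fun n : ℕ => (n:ℝ) * x ^ n) (x / (1-x)^2) :=
    hasSum_coe_mul_geometric_of_norm_lt_one (by rw [Real.norm_eq_abs, abs_of_pos hx0]; exact hx1)
  have hsum : HasSum (fun n : ℕ => ((n:ℝ)+1) * x ^ n) (((1-x)^2)⁻¹) := by
    have := hn.add hg
    convert this using 1
    · ext n; ring
    · field_simp
      ring
  have := hsum.mul_left (x ^ q₁ * (1-x) ^ (s-1))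
  convert this using 1
  · rfl
  · ext n
    rw [Real.rpow_add hx0, Real.rpow_natCast]
    ring
  · rw [show s - 1 = (s-3) + 2 by ring, Real.rpow_add h1x, Real.rpow_two]
    field_simp

lemma keySum (h₁ : 0 ≤ q₁) (hs : 2 < s) :
    HasSum (fun n : ℕ =>
        ((n:ℝ)+1) * (Real.Gamma (q₁+(n:ℝ)+1) * Real.Gamma s / Real.Gamma (q₁+(n:ℝ)+1+s)))
      (∫ x in (0:ℝ)..1, x ^ q₁ * (1-x) ^ (s-3)) := by
  have hterm : ∀ n : ℕ, ∫ x in Set.Ioo (0:ℝ) 1, x ^ (q₁+(n:ℝ)) * (1-x) ^ (s-1)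
      = Real.Gamma (q₁+(n:ℝ)+1) * Real.Gamma s / Real.Gamma (q₁+(n:ℝ)+1+s) := by
    intro n
    rw [← MeasureTheory.integral_Ioc_eq_integral_Ioo,
      ← intervalIntegral.integral_of_le zero_le_one,
      betaReal (by have : (0:ℝ) ≤ (n:ℝ) := n.cast_nonneg; linarith) (by linarith : (-1:ℝ) < s - 1)]
    rw [show s - 1 + 1 = s by ring, show q₁+(n:ℝ)+(s-1)+2 = q₁+(n:ℝ)+1+s by ring]
  have hint : ∀ n : ℕ, IntegrableOn (fun x : ℝ => x ^ (q₁+(n:ℝ)) * (1-x) ^ (s-1))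
      (Set.Ioo 0 1) volume := fun n =>
    ((intInt (by have : (0:ℝ) ≤ (n:ℝ) := n.cast_nonneg; linarith) (by linarith)).1).mono_set Set.Ioo_subset_Ioc_self
  have hg_int : IntegrableOn (fun x : ℝ => x ^ q₁ * (1-x) ^ (s-3)) (Set.Ioo 0 1) volume :=
    ((intInt (by linarith) (by linarith)).1).mono_set Set.Ioo_subset_Ioc_self
  have hnonneg : ∀ (x : ℝ), x ∈ Set.Ioo (0:ℝ) 1 → ∀ n : ℕ,
      0 ≤ ((n:ℝ)+1) * (x ^ (q₁+(n:ℝ)) * (1-x) ^ (s-1)) := by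
    intro x hx n
    have hx0 := hx.1
    have h1x : (0:ℝ) < 1 - x := by linarith [hx.2]
    positivity
  have hDCT := MeasureTheory.tendsto_integral_of_dominated_convergence
    (μ := volume.restrict (Set.Ioo (0:ℝ) 1))
    (F := fun N x => ∑ n ∈ Finset.range N, ((n:ℝ)+1) * (x ^ (q₁+(n:ℝ)) * (1-x) ^ (s-1)))
    (f := fun x => x ^ q₁ * (1-x) ^ (s-3))
    (fun x => x ^ q₁ * (1-x) ^ (s-3))
    (fun N => (Finset.aestronglyMeasurable_fun_sum _ (fun n _ =>
      ((hint n).const_mul _).aestronglyMeasurable)))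
    hg_int
    (by
      intro N
      filter_upwards [ae_restrict_mem measurableSet_Ioo] with x hx
      rw [Real.norm_eq_abs, abs_of_nonneg (Finset.sum_nonneg (fun n _ => hnonneg x hx n))]
      exact sum_le_hasSum _ (fun n _ => hnonneg x hx n) (ptSum h₁ hx))
    (by
      filter_upwards [ae_restrict_mem measurableSet_Ioo] with x hx
      exact (ptSum h₁ hx).tendsto_sum_nat)
  have hFN : ∀ N : ℕ, (∫ x in Set.Ioo (0:ℝ) 1,
        ∑ n ∈ Finset.range N, ((n:ℝ)+1) * (x ^ (q₁+(n:ℝ)) * (1-x) ^ (s-1)))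
      = ∑ n ∈ Finset.range N,
        ((n:ℝ)+1) * (Real.Gamma (q₁+(n:ℝ)+1) * Real.Gamma s / Real.Gamma (q₁+(n:ℝ)+1+s)) := by
    intro N
    rw [MeasureTheory.integral_finset_sum _ (fun n _ => (hint n).const_mul _)]
    exact Finset.sum_congr rfl (fun n _ => by
      rw [MeasureTheory.integral_const_mul, hterm n])
  rw [hasSum_iff_tendsto_nat_of_nonneg (fun n => by
    have g1 := Real.Gamma_pos_of_pos (show (0:ℝ) < q₁+(n:ℝ)+1 by positivity)
    have g2 := Real.Gamma_pos_of_pos (show (0:ℝ) < s by linarith)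
    have g3 := Real.Gamma_pos_of_pos (show (0:ℝ) < q₁+(n:ℝ)+1+s by positivity)
    positivity)]
  rw [intervalIntegral.integral_of_le zero_le_one, MeasureTheory.integral_Ioc_eq_integral_Ioo]
  simpa only [hFN] using hDCT

end


set_option maxHeartbeats 1000000 in
theorem stmt_11 (q₁ q₂ : ℝ) (h₁ : 0 ≤ q₁) (h₂ : 1 < q₂) :
    Tendsto
      (fun p : ℝ =>
        Real.Gamma (q₂ + 1) *
          ∑' n : ℕ, ((n + 1 : ℝ) * p ^ n * Real.Gamma (q₁ + (n + 1)) /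
            Real.Gamma (p * (q₁ + q₂) + (n + 2))))
      (nhdsWithin 1 (Set.Ioo (0:ℝ) 1))
      (nhds (∫ x in (0:ℝ)..1, (1 - x) ^ q₁ * x ^ (q₂ - 2))) := by
  set q : ℝ := q₁ + q₂ with hq
  have hq0 : (0:ℝ) < q := by rw [hq]; linarith
  have hq1 : q₁ + 1 < q := by rw [hq]; linarith
  set p₀ : ℝ := (q₁ + 1 + q) / (2 * q) with hp₀
  have hp₀q : p₀ * q = (q₁ + 1 + q) / 2 := by rw [hp₀]; field_simp
  have hp₀pos : 0 < p₀ := div_pos (by linarith) (by linarith)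
  have hp₀lt1 : p₀ < 1 := by rw [hp₀, div_lt_one (by linarith)]; linarith
  have hq1p : q₁ + 1 < p₀ * q := by rw [hp₀q]; linarith
  set s₀ : ℝ := p₀ * q - q₁ + 1 with hs₀def
  have hs₀ : 2 < s₀ := by rw [hs₀def]; linarith
  have hΓs₀ : 0 < Real.Gamma s₀ := Real.Gamma_pos_of_pos (by linarith)
  -- the limit sequence
  set g : ℕ → ℝ := fun n => ((n:ℝ) + 1) * Real.Gamma (q₁ + ((n:ℝ) + 1)) /
    Real.Gamma (q + ((n:ℝ) + 2)) with hg
  -- pointwise limits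
  have hL : ∀ n : ℕ, Tendsto (fun p : ℝ => ((n:ℝ) + 1) * p ^ n * Real.Gamma (q₁ + ((n:ℝ) + 1)) /
      Real.Gamma (p * q + ((n:ℝ) + 2))) (nhdsWithin 1 (Set.Ioo (0:ℝ) 1)) (nhds (g n)) := by
    intro n
    have hpos : (0:ℝ) < q + ((n:ℝ) + 2) := by positivity
    have hden : Tendsto (fun p : ℝ => Real.Gamma (p * q + ((n:ℝ) + 2))) (nhds 1)
        (nhds (Real.Gamma (q + ((n:ℝ) + 2)))) := by
      have hc : ContinuousAt Real.Gamma (q + ((n:ℝ) + 2)) := by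
        apply (Real.differentiableAt_Gamma ?_).continuousAt
        intro m
        have : (0:ℝ) ≤ (m:ℝ) := m.cast_nonneg
        intro h
        rw [h] at hpos
        linarith
      have hm : Tendsto (fun p : ℝ => p * q + ((n:ℝ) + 2)) (nhds 1)
          (nhds (q + ((n:ℝ) + 2))) := by
        have : Continuous fun p : ℝ => p * q + ((n:ℝ) + 2) := by continuity
        simpa using this.tendsto 1
      exact hc.tendsto.comp hm
    have hnum : Tendsto (fun p : ℝ => ((n:ℝ) + 1) * p ^ n * Real.Gamma (q₁ + ((n:ℝ) + 1)))
        (nhds 1) (nhds (((n:ℝ) + 1) * Real.Gamma (q₁ + ((n:ℝ) + 1)))) := by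
      have : Continuous fun p : ℝ => ((n:ℝ) + 1) * p ^ n * Real.Gamma (q₁ + ((n:ℝ) + 1)) := by
        continuity
      simpa using this.tendsto 1
    have := (hnum.div hden (Real.Gamma_pos_of_pos hpos).ne')
    rw [hg]
    exact this.mono_left nhdsWithin_le_nhds
  -- summable bound
  have hbd_sum : Summable (fun n : ℕ => ((n:ℝ) + 1) * Real.Gamma (q₁ + ((n:ℝ) + 1)) /
      Real.Gamma (p₀ * q + ((n:ℝ) + 2))) := by
    have hk := (keySum (s := s₀) h₁ hs₀).summable.mul_left (Real.Gamma s₀)⁻¹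
    apply hk.congr
    intro n
    rw [show q₁ + (n:ℝ) + 1 + s₀ = p₀ * q + ((n:ℝ) + 2) from by rw [hs₀def]; ring,
      show q₁ + (n:ℝ) + 1 = q₁ + ((n:ℝ) + 1) from by ring]
    field_simp
  -- eventual bound
  have h_bound : ∀ᶠ p in nhdsWithin 1 (Set.Ioo (0:ℝ) 1), ∀ n : ℕ,
      ‖((n:ℝ) + 1) * p ^ n * Real.Gamma (q₁ + ((n:ℝ) + 1)) /
        Real.Gamma (p * q + ((n:ℝ) + 2))‖ ≤
      ((n:ℝ) + 1) * Real.Gamma (q₁ + ((n:ℝ) + 1)) / Real.Gamma (p₀ * q + ((n:ℝ) + 2)) := by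
    filter_upwards [eventually_mem_nhdsWithin,
      eventually_nhdsWithin_of_eventually_nhds (eventually_gt_nhds hp₀lt1)] with p hp hpp₀
    intro n
    obtain ⟨hp0, hp1⟩ := hp
    have hΓ1 : 0 < Real.Gamma (q₁ + ((n:ℝ) + 1)) := Real.Gamma_pos_of_pos (by positivity)
    have hΓp : 0 < Real.Gamma (p * q + ((n:ℝ) + 2)) :=
      Real.Gamma_pos_of_pos (by positivity)
    have hΓp₀ : 0 < Real.Gamma (p₀ * q + ((n:ℝ) + 2)) :=
      Real.Gamma_pos_of_pos (by positivity)
    rw [Real.norm_eq_abs, abs_of_nonneg (by positivity)]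
    apply div_le_div₀ (by positivity) ?_ hΓp₀ ?_
    · have hpn : p ^ n ≤ 1 := pow_le_one₀ hp0.le hp1.le
      have h2 : ((n:ℝ)+1) * p ^ n ≤ ((n:ℝ)+1) := by nlinarith [Nat.cast_nonneg (α := ℝ) n]
      nlinarith [mul_le_mul_of_nonneg_right h2 hΓ1.le]
    · apply Real.Gamma_strictMonoOn_Ici.monotoneOn
      · simp only [Set.mem_Ici]
        nlinarith [Nat.cast_nonneg (α := ℝ) n, mul_nonneg hp₀pos.le hq0.le]
      · simp only [Set.mem_Ici]
        nlinarith [Nat.cast_nonneg (α := ℝ) n, mul_nonneg hp0.le hq0.le]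
      · have : p₀ * q ≤ p * q := mul_le_mul_of_nonneg_right hpp₀.le hq0.le
        linarith
  have hmain := tendsto_tsum_of_dominated_convergence hbd_sum hL h_bound
  -- identify the limit value
  have hswap : (∫ x in (0:ℝ)..1, (1 - x) ^ q₁ * x ^ (q₂ - 2))
      = ∫ x in (0:ℝ)..1, x ^ q₁ * (1 - x) ^ (q₂ - 2) := by
    have h := intervalIntegral.integral_comp_sub_left (a := 0) (b := 1)
      (fun y : ℝ => y ^ q₁ * (1 - y) ^ (q₂ - 2)) 1
    simp only [sub_sub_cancel] at h
    norm_num at h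
    exact h
  have hvalue : Real.Gamma (q₂ + 1) * ∑' n, g n
      = ∫ x in (0:ℝ)..1, x ^ q₁ * (1 - x) ^ (q₂ - 2) := by
    have hks := keySum (s := q₂ + 1) h₁ (by linarith)
    rw [show q₂ + 1 - 3 = q₂ - 2 from by ring] at hks
    rw [← tsum_mul_left, ← hks.tsum_eq]
    apply tsum_congr
    intro n
    rw [hg, show q₁ + (n:ℝ) + 1 + (q₂ + 1) = q + ((n:ℝ) + 2) from by rw [hq]; ring,
      show q₁ + (n:ℝ) + 1 = q₁ + ((n:ℝ) + 1) from by ring]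
    ring
  rw [hswap, ← hvalue]
  exact hmain.const_mul _
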